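/- arXiv:0711.0269 — 2 statements merged into one kernel-verified Lean document; each statement's English description precedes it below -/
import Mathlib

section
/- For λ > μ ≥ 0, t > 0 and σ ∈ (0,1), with f = f(σ,t) = (λ-μ)(1-e^{-(λ-μ)σt}) e^{-(λ-μ)(1-σ)t}/((1-e^{-(λ-μ)(1-σ)t})(λ-μe^{-(λ-μ)t})), the series ∑_{n=1}^{∞} (1 + n f)/(1 + f) · λ^{n-1}(λ-μ) e^{-(λ-μ)t}(1 - e^{-(λ-μ)t})^{n-1}/(λ - μ e^{-(λ-μ)t})^{n} converges and equals e^{(λ-μ)σt} (λ - μ e^{-(λ-μ)t})/(λ - μ e^{-(λ-μ)(1-σ)t}). -/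
theorem nee_ltt_expectation
    (lam mu t sigma : ℝ) (hmu : 0 ≤ mu) (hlm : mu < lam) (ht : 0 < t)
    (hs : sigma ∈ Set.Ioo (0 : ℝ) 1) :
    let f : ℝ := (lam - mu) * (1 - Real.exp (-(lam - mu) * (sigma * t)))
        * Real.exp (-(lam - mu) * ((1 - sigma) * t)) /
      ((1 - Real.exp (-(lam - mu) * ((1 - sigma) * t)))
        * (lam - mu * Real.exp (-(lam - mu) * t)))
    HasSum (fun k : ℕ =>
      (1 + ((k : ℝ) + 1) * f) / (1 + f) *
        (lam ^ k * (lam - mu) * Real.exp (-(lam - mu) * t)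
          * (1 - Real.exp (-(lam - mu) * t)) ^ k
          / (lam - mu * Real.exp (-(lam - mu) * t)) ^ (k + 1)))
      (Real.exp ((lam - mu) * (sigma * t)) *
        (lam - mu * Real.exp (-(lam - mu) * t)) /
        (lam - mu * Real.exp (-(lam - mu) * ((1 - sigma) * t)))) := by
  intro f
  obtain ⟨hs0, hs1⟩ := hs
  have hd : (0:ℝ) < lam - mu := sub_pos.mpr hlm
  have hlam : (0:ℝ) < lam := lt_of_le_of_lt hmu hlm
  set a : ℝ := Real.exp (-(lam - mu) * (sigma * t)) with ha_def
  set b : ℝ := Real.exp (-(lam - mu) * ((1 - sigma) * t)) with hb_def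
  set E : ℝ := Real.exp (-(lam - mu) * t) with hE_def
  have ha0 : 0 < a := Real.exp_pos _
  have hb0 : 0 < b := Real.exp_pos _
  have hE0 : 0 < E := Real.exp_pos _
  have hE_ab : E = a * b := by
    rw [ha_def, hb_def, hE_def, ← Real.exp_add]
    ring_nf
  have ha1 : a < 1 := by
    rw [ha_def, Real.exp_lt_one_iff]
    nlinarith [mul_pos hd (mul_pos hs0 ht)]
  have hb1 : b < 1 := by
    rw [hb_def, Real.exp_lt_one_iff]
    nlinarith [mul_pos hd (mul_pos (by linarith : (0:ℝ) < 1 - sigma) ht)]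
  have hE1 : E < 1 := by
    rw [hE_def, Real.exp_lt_one_iff]
    nlinarith [mul_pos hd ht]
  have hD : 0 < lam - mu * E := by nlinarith
  have hDb : 0 < lam - mu * b := by nlinarith
  have h1a : 0 < 1 - a := by linarith
  have h1b : 0 < 1 - b := by linarith
  have hf : f = (lam - mu) * (1 - a) * b / ((1 - b) * (lam - mu * E)) := rfl
  have hf0 : 0 < f := by
    rw [hf]
    exact div_pos (mul_pos (mul_pos hd h1a) hb0) (mul_pos h1b hD)
  have h1f : 0 < 1 + f := by linarith
  set r : ℝ := lam * (1 - E) / (lam - mu * E) with hr_def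
  have hr0 : 0 ≤ r := by
    apply div_nonneg _ (le_of_lt hD)
    nlinarith
  have hr1 : r < 1 := by
    rw [hr_def, div_lt_one hD]
    nlinarith
  have h1r : 1 - r = (lam - mu) * E / (lam - mu * E) := by
    rw [hr_def]
    rw [eq_div_iff (ne_of_gt hD), sub_mul, div_mul_cancel₀ _ (ne_of_gt hD)]
    ring
  have h1r0 : 0 < 1 - r := by linarith
  have h1 : HasSum (fun k : ℕ => r ^ k) (1 - r)⁻¹ :=
    hasSum_geometric_of_lt_one hr0 hr1
  have h2 : HasSum (fun k : ℕ => (k : ℝ) * r ^ k) (r / (1 - r) ^ 2) :=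
    hasSum_coe_mul_geometric_of_norm_lt_one
      (by rwa [Real.norm_eq_abs, abs_of_nonneg hr0])
  have h3 : HasSum (fun k : ℕ => ((k : ℝ) + 1) * r ^ k) (((1 - r) ^ 2)⁻¹) := by
    have heq : (fun k : ℕ => ((k : ℝ) + 1) * r ^ k)
        = fun k : ℕ => (k : ℝ) * r ^ k + r ^ k := by
      funext k; ring
    have hval : r / (1 - r) ^ 2 + (1 - r)⁻¹ = ((1 - r) ^ 2)⁻¹ := by
      field_simp
      ring
    rw [heq, ← hval]
    exact h2.add h1
  set A : ℝ := (1 - r) / (1 + f) with hA_def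
  set B : ℝ := f * (1 - r) / (1 + f) with hB_def
  have H : HasSum (fun k : ℕ => A * r ^ k + B * (((k : ℝ) + 1) * r ^ k))
      (A * (1 - r)⁻¹ + B * ((1 - r) ^ 2)⁻¹) :=
    (h1.mul_left A).add (h3.mul_left B)
  have hfun : (fun k : ℕ =>
      (1 + ((k : ℝ) + 1) * f) / (1 + f) *
        (lam ^ k * (lam - mu) * E * (1 - E) ^ k / (lam - mu * E) ^ (k + 1)))
      = fun k : ℕ => A * r ^ k + B * (((k : ℝ) + 1) * r ^ k) := by
    funext k
    have hrk : r ^ k = lam ^ k * (1 - E) ^ k / (lam - mu * E) ^ k := by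
      rw [hr_def, div_pow, mul_pow]
    rw [hA_def, hB_def, hrk, h1r, pow_succ]
    field_simp
  have hval : Real.exp ((lam - mu) * (sigma * t)) * (lam - mu * E) / (lam - mu * b)
      = A * (1 - r)⁻¹ + B * ((1 - r) ^ 2)⁻¹ := by
    have hainv : Real.exp ((lam - mu) * (sigma * t)) = a⁻¹ := by
      rw [ha_def, ← Real.exp_neg]
      ring_nf
    have hane : a ≠ 0 := ne_of_gt ha0
    have hbne : b ≠ 0 := ne_of_gt hb0
    have h1bne : (1:ℝ) - b ≠ 0 := ne_of_gt h1b
    have hDne : lam - mu * E ≠ 0 := ne_of_gt hD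
    have hDbne : lam - mu * b ≠ 0 := ne_of_gt hDb
    have h1fne : (1:ℝ) + f ≠ 0 := ne_of_gt h1f
    have h1rne : (1:ℝ) - r ≠ 0 := ne_of_gt h1r0
    have hdne : lam - mu ≠ 0 := ne_of_gt hd
    have hDab : 0 < lam - mu * (a * b) := by rw [← hE_ab]; exact hD
    have h1ab : 0 < 1 - a * b := by nlinarith
    have step1 : A * (1 - r)⁻¹ + B * ((1 - r) ^ 2)⁻¹
        = (1 + f * (1 - r)⁻¹) / (1 + f) := by
      rw [hA_def, hB_def]
      field_simp
    have e1 : f * (1 - r)⁻¹ = (1 - a) / ((1 - b) * a) := by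
      rw [hf, h1r, hE_ab, inv_div, div_mul_div_comm,
        div_eq_div_iff
          (ne_of_gt (mul_pos (mul_pos h1b hDab) (mul_pos hd (mul_pos ha0 hb0))))
          (ne_of_gt (mul_pos h1b ha0))]
      ring
    have e2 : (1 : ℝ) + (1 - a) / ((1 - b) * a) = (1 - a * b) / ((1 - b) * a) := by
      rw [eq_div_iff (ne_of_gt (mul_pos h1b ha0)), add_mul,
        div_mul_cancel₀ _ (ne_of_gt (mul_pos h1b ha0))]
      ring
    have e3 : (1 : ℝ) + f
        = (1 - a * b) * (lam - mu * b) / ((1 - b) * (lam - mu * (a * b))) := by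
      rw [hf, hE_ab, eq_div_iff (ne_of_gt (mul_pos h1b hDab)), add_mul,
        div_mul_cancel₀ _ (ne_of_gt (mul_pos h1b hDab))]
      ring
    rw [hainv, step1, e1, e2, e3, hE_ab, div_div_div_eq, inv_mul_eq_div, div_div]
    rw [div_eq_div_iff (ne_of_gt (mul_pos ha0 hDb))
      (ne_of_gt (mul_pos (mul_pos h1b ha0) (mul_pos h1ab hDb)))]
    ring
  rw [hfun, hval]
  exact H
end

section
/- For λ > μ ≥ 0 with λ > 0 and integer n ≥ 1, the function q(t) = n λ^n (λ-μ)^2 (1 - e^{-(λ-μ)t})^{n-1} e^{-(λ-μ)t} / (λ - μ e^{-(λ-μ)t})^{n+1} is a probability density on (0, ∞), i.e., ∫_0^∞ q(t) dt = 1. -/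
open MeasureTheory Set Filter Real

theorem origin_time_density_integrates_to_one
    (lam mu : ℝ) (n : ℕ) (hmu : 0 ≤ mu) (hlm : mu < lam) (hn : 1 ≤ n) :
    ∫ t in Set.Ioi (0 : ℝ),
      (n : ℝ) * lam ^ n * (lam - mu) ^ 2
        * (1 - Real.exp (-(lam - mu) * t)) ^ (n - 1) * Real.exp (-(lam - mu) * t)
        / (lam - mu * Real.exp (-(lam - mu) * t)) ^ (n + 1) = 1 := by
  obtain ⟨m, rfl⟩ : ∃ m, n = m + 1 := ⟨n - 1, (Nat.succ_pred_eq_of_pos hn).symm⟩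
  have hlam : 0 < lam := lt_of_le_of_lt hmu hlm
  have hd : 0 < lam - mu := sub_pos.mpr hlm
  set g : ℝ → ℝ := fun t =>
    (lam * (1 - Real.exp (-(lam - mu) * t)) / (lam - mu * Real.exp (-(lam - mu) * t))) ^ (m + 1)
    with hg_def
  have hden : ∀ t : ℝ, 0 ≤ t → 0 < lam - mu * Real.exp (-(lam - mu) * t) := by
    intro t ht
    have h1 : Real.exp (-(lam - mu) * t) ≤ 1 := by
      rw [Real.exp_le_one_iff]
      nlinarith
    nlinarith [Real.exp_pos (-(lam - mu) * t)]
  have hexp : ∀ t : ℝ, HasDerivAt (fun t => Real.exp (-(lam - mu) * t))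
      (-(lam - mu) * Real.exp (-(lam - mu) * t)) t := by
    intro t
    have h1 : HasDerivAt (fun t : ℝ => -(lam - mu) * t) (-(lam - mu)) t := by
      simpa using (hasDerivAt_id t).const_mul (-(lam - mu))
    convert h1.exp using 1
    ring
  have hderiv : ∀ t ∈ Set.Ioi (0 : ℝ), HasDerivAt g
      ((↑(m + 1) : ℝ) * lam ^ (m + 1) * (lam - mu) ^ 2
        * (1 - Real.exp (-(lam - mu) * t)) ^ (m + 1 - 1) * Real.exp (-(lam - mu) * t)
        / (lam - mu * Real.exp (-(lam - mu) * t)) ^ (m + 1 + 1)) t := by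
    intro t ht
    have hdenpos : 0 < lam - mu * Real.exp (-(lam - mu) * t) := hden t (le_of_lt ht)
    have hne : lam - mu * Real.exp (-(lam - mu) * t) ≠ 0 := ne_of_gt hdenpos
    have hnum : HasDerivAt (fun t => lam * (1 - Real.exp (-(lam - mu) * t)))
        (lam * ((lam - mu) * Real.exp (-(lam - mu) * t))) t := by
      have h1 : HasDerivAt (fun t => 1 - Real.exp (-(lam - mu) * t))
          ((lam - mu) * Real.exp (-(lam - mu) * t)) t := by
        refine ((hexp t).const_sub 1).congr_deriv ?_
        ring
      convert h1.const_mul lam using 1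
    have hden' : HasDerivAt (fun t => lam - mu * Real.exp (-(lam - mu) * t))
        (-(mu * (-(lam - mu) * Real.exp (-(lam - mu) * t)))) t :=
      ((hexp t).const_mul mu).const_sub lam
    have H := (hnum.div hden' hne).pow (m + 1)
    refine H.congr_deriv ?_
    simp only [Pi.div_apply, Nat.add_sub_cancel, div_pow, mul_pow]
    generalize hEe : Real.exp (-(lam - mu) * t) = E at hne ⊢
    field_simp
    ring
  have hnonneg : ∀ t ∈ Set.Ioi (0 : ℝ),
      0 ≤ (↑(m + 1) : ℝ) * lam ^ (m + 1) * (lam - mu) ^ 2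
        * (1 - Real.exp (-(lam - mu) * t)) ^ (m + 1 - 1) * Real.exp (-(lam - mu) * t)
        / (lam - mu * Real.exp (-(lam - mu) * t)) ^ (m + 1 + 1) := by
    intro t ht
    have hE1 : Real.exp (-(lam - mu) * t) ≤ 1 := by
      rw [Real.exp_le_one_iff]
      nlinarith [le_of_lt (mem_Ioi.mp ht)]
    apply div_nonneg
    · have h1 : (0:ℝ) ≤ 1 - Real.exp (-(lam - mu) * t) := by linarith
      positivity
    · exact pow_nonneg (le_of_lt (hden t (le_of_lt ht))) _
  have hE0 : Tendsto (fun t : ℝ => Real.exp (-(lam - mu) * t)) atTop (nhds 0) := by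
    have h1 : Tendsto (fun t : ℝ => (lam - mu) * t) atTop atTop :=
      Tendsto.const_mul_atTop hd tendsto_id
    have h2 : Tendsto (fun t : ℝ => -(lam - mu) * t) atTop atBot :=
      (tendsto_neg_atTop_atBot.comp h1).congr fun t => (neg_mul _ _).symm
    exact Real.tendsto_exp_atBot.comp h2
  have hcontAt : ContinuousAt (fun x : ℝ => (lam * (1 - x) / (lam - mu * x)) ^ (m + 1)) 0 := by
    have hne0 : lam - mu * (0:ℝ) ≠ 0 := by simp; linarith
    exact (((continuousAt_const.mul (continuousAt_const.sub continuousAt_id)).div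
      (continuousAt_const.sub (continuousAt_const.mul continuousAt_id)) hne0).pow _)
  have htend : Tendsto g atTop (nhds 1) := by
    have h := hcontAt.tendsto.comp hE0
    have hval : (lam * (1 - (0:ℝ)) / (lam - mu * 0)) ^ (m + 1) = 1 := by
      rw [mul_zero, sub_zero, sub_zero, mul_one, div_self hlam.ne']
      exact one_pow _
    have h2 : Tendsto g atTop (nhds ((lam * (1 - (0:ℝ)) / (lam - mu * 0)) ^ (m + 1))) := h
    rwa [hval] at h2
  have hcont : ContinuousWithinAt g (Set.Ici (0:ℝ)) 0 := by
    apply ContinuousAt.continuousWithinAt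
    apply ContinuousAt.pow
    apply ContinuousAt.div
    · fun_prop
    · fun_prop
    · exact (hden 0 le_rfl).ne'
  have key := integral_Ioi_of_hasDerivAt_of_nonneg hcont hderiv hnonneg htend
  rw [key]
  have : g 0 = 0 := by
    simp [hg_def]
  rw [this, sub_zero]
end
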